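/- If the finite discounted return of the exponentially normalized safety reward attains its maximum value, i.e., ∑_{k=0}^{k_max - 1} γ^k · exp(min(h(s(k+1)) + (α-1)·h(s(k)), 0)) = (1 - γ^{k_max})/(1 - γ) with 0 < γ < 1, then h(s(k+1)) + (α-1)·h(s(k)) ≥ 0 for all k < k_max; consequently, if additionally h(s(0)) ≥ 0 and 0 < α < 1, then h(s(k)) ≥ 0 for all k ≤ k_max. -/

import Mathlib

theorem stmt_7 {S : Type*} (h : S → ℝ) (α γ : ℝ) (hγ0 : 0 < γ) (hγ1 : γ < 1)
    (kmax : ℕ) (s : ℕ → S)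
    (heq : (∑ k ∈ Finset.range kmax,
        γ ^ k * Real.exp (min (h (s (k + 1)) + (α - 1) * h (s k)) 0))
      = (1 - γ ^ kmax) / (1 - γ)) :
    (∀ k < kmax, h (s (k + 1)) + (α - 1) * h (s k) ≥ 0) ∧
    (h (s 0) ≥ 0 → 0 < α → α < 1 → ∀ k ≤ kmax, h (s k) ≥ 0) := by
  have hgeom : (∑ k ∈ Finset.range kmax, γ ^ k) = (1 - γ ^ kmax) / (1 - γ) := by
    rw [geom_sum_eq (by linarith : γ ≠ 1), div_eq_div_iff (by linarith) (by linarith)]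
    ring
  have hle : ∀ k ∈ Finset.range kmax,
      γ ^ k * Real.exp (min (h (s (k + 1)) + (α - 1) * h (s k)) 0) ≤ γ ^ k := by
    intro k _
    have : Real.exp (min (h (s (k + 1)) + (α - 1) * h (s k)) 0) ≤ 1 := by
      rw [← Real.exp_zero]
      exact Real.exp_le_exp.mpr (min_le_right _ _)
    nlinarith [pow_pos hγ0 k]
  have hsum : (∑ k ∈ Finset.range kmax,
      γ ^ k * Real.exp (min (h (s (k + 1)) + (α - 1) * h (s k)) 0))
      = ∑ k ∈ Finset.range kmax, γ ^ k := by rw [heq, hgeom]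
  have hterm : ∀ k ∈ Finset.range kmax,
      γ ^ k * Real.exp (min (h (s (k + 1)) + (α - 1) * h (s k)) 0) = γ ^ k :=
    fun k hk => (Finset.sum_eq_sum_iff_of_le hle).mp hsum k hk
  have key : ∀ k < kmax, h (s (k + 1)) + (α - 1) * h (s k) ≥ 0 := by
    intro k hk
    have := hterm k (Finset.mem_range.mpr hk)
    have hpow := pow_pos hγ0 k
    have hne : γ ^ k ≠ 0 := ne_of_gt hpow
    field_simp at this
    rw [Real.exp_eq_one_iff, min_eq_right_iff] at this
    linarith
  refine ⟨key, fun h0 hα0 hα1 => ?_⟩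
  intro k hk
  induction k with
  | zero => exact h0
  | succ n ih =>
    have hn : n < kmax := Nat.lt_of_succ_le hk
    have := key n hn
    have ihn := ih (le_of_lt hn)
    nlinarith
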